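/- Let B be a closed disk in the Euclidean plane with center p and radius r > 0, and let D₂ be the closed disk of radius 2 centered at the origin. Then the Lebesgue measure of the set {x ∈ [1,2] : the circle of radius x centered at the origin intersects B} is at most 2·√(area(B ∩ D₂)/π). -/

import Mathlib

open MeasureTheory

/-- The measure of the set of radii `x ∈ [1,2]` for which the circle of radius `x`
centered at the origin meets a closed disk `B` of positive radius is at most
`2 √(area(B ∩ D₂)/π)`, where `D₂` is the closed disk of radius 2 at the origin. -/
theorem measure_radii_hitting_disk_le_sqrt_lens_area
    (p : EuclideanSpace ℝ (Fin 2)) (r : ℝ) (hr : 0 < r) :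
    volume {x : ℝ | x ∈ Set.Icc (1 : ℝ) 2 ∧
      (Metric.sphere (0 : EuclideanSpace ℝ (Fin 2)) x ∩ Metric.closedBall p r).Nonempty} ≤
      ENNReal.ofReal (2 * Real.sqrt
        ((volume (Metric.closedBall p r ∩
          Metric.closedBall (0 : EuclideanSpace ℝ (Fin 2)) 2)).toReal / Real.pi)) := by
  set d : ℝ := ‖p‖ with hd
  set a : ℝ := max 1 (d - r) with ha
  set b : ℝ := min 2 (d + r) with hb
  set A : ℝ := (volume (Metric.closedBall p r ∩
      Metric.closedBall (0 : EuclideanSpace ℝ (Fin 2)) 2)).toReal with hA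
  have hA0 : 0 ≤ A := ENNReal.toReal_nonneg
  have hsub : {x : ℝ | x ∈ Set.Icc (1 : ℝ) 2 ∧
      (Metric.sphere (0 : EuclideanSpace ℝ (Fin 2)) x ∩ Metric.closedBall p r).Nonempty}
      ⊆ Set.Icc a b := by
    rintro x ⟨⟨h1, h2⟩, ⟨q, hq1, hq2⟩⟩
    rw [Metric.mem_sphere] at hq1
    rw [Metric.mem_closedBall] at hq2
    have hdd : |x - d| ≤ r := by
      have hq1' : ‖q‖ = x := by rw [← dist_zero_right]; exact hq1
      have h := abs_norm_sub_norm_le q p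
      rw [hq1', ← dist_eq_norm] at h
      exact h.trans hq2
    rw [abs_le] at hdd
    constructor
    · exact max_le h1 (by linarith [hdd.1])
    · exact le_min h2 (by linarith [hdd.2])
  have key : b - a ≤ 2 * Real.sqrt (A / Real.pi) := by
    rcases le_or_gt (b - a) 0 with hL | hL
    · have : 0 ≤ Real.sqrt (A / Real.pi) := Real.sqrt_nonneg _
      linarith
    · -- build the inner disk
      set L : ℝ := b - a with hLdef
      obtain ⟨u, hu, hpu⟩ : ∃ u : EuclideanSpace ℝ (Fin 2), ‖u‖ = 1 ∧ p = d • u := by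
        rcases eq_or_ne p 0 with h0 | h0
        · refine ⟨EuclideanSpace.single 0 1, by simp [EuclideanSpace.norm_single], ?_⟩
          simp [h0, hd]
        · refine ⟨‖p‖⁻¹ • p, ?_, ?_⟩
          · rw [norm_smul, norm_inv, norm_norm, inv_mul_cancel₀ (norm_ne_zero_iff.mpr h0)]
          · rw [smul_smul, hd, mul_inv_cancel₀ (norm_ne_zero_iff.mpr h0), one_smul]
      set m : EuclideanSpace ℝ (Fin 2) := ((a + b) / 2) • u with hm
      have ha1 : (1 : ℝ) ≤ a := le_max_left _ _
      have ha2 : d - r ≤ a := le_max_right _ _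
      have hb1 : b ≤ 2 := min_le_left _ _
      have hb2 : b ≤ d + r := min_le_right _ _
      have hball : Metric.closedBall m (L / 2) ⊆
          Metric.closedBall p r ∩ Metric.closedBall (0 : EuclideanSpace ℝ (Fin 2)) 2 := by
        intro q hq
        rw [Metric.mem_closedBall] at hq
        have hmp : dist m p = |(a + b) / 2 - d| := by
          rw [hpu, hm, dist_eq_norm, ← sub_smul, norm_smul, hu, mul_one, Real.norm_eq_abs]
        have hm0 : dist m (0 : EuclideanSpace ℝ (Fin 2)) = (a + b) / 2 := by
          rw [dist_zero_right, hm, norm_smul, hu, mul_one, Real.norm_eq_abs, abs_of_nonneg]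
          nlinarith
        constructor
        · rw [Metric.mem_closedBall]
          have h1 : |(a + b) / 2 - d| ≤ r - L / 2 := by
            rw [abs_le]; constructor <;> [nlinarith; nlinarith]
          calc dist q p ≤ dist q m + dist m p := dist_triangle _ _ _
            _ ≤ L / 2 + (r - L / 2) := add_le_add hq (hmp ▸ h1)
            _ = r := by ring
        · rw [Metric.mem_closedBall]
          calc dist q 0 ≤ dist q m + dist m 0 := dist_triangle _ _ _
            _ ≤ L / 2 + (a + b) / 2 := add_le_add hq (le_of_eq hm0)
            _ = b := by rw [hLdef]; ring
            _ ≤ 2 := hb1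
      have hvol : ENNReal.ofReal (L / 2) ^ 2 * ENNReal.ofReal Real.pi ≤
          volume (Metric.closedBall p r ∩
            Metric.closedBall (0 : EuclideanSpace ℝ (Fin 2)) 2) := by
        have := measure_mono (μ := volume) hball
        rw [EuclideanSpace.volume_closedBall] at this
        have hcard : Fintype.card (Fin 2) = 2 := by simp
        rw [hcard] at this
        convert this using 2
        rw [show ((2:ℕ):ℝ)/2 + 1 = 2 by norm_num, Real.Gamma_two,
          Real.sq_sqrt Real.pi_pos.le, div_one]
      have hfin : volume (Metric.closedBall p r ∩
          Metric.closedBall (0 : EuclideanSpace ℝ (Fin 2)) 2) ≠ ⊤ := by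
        refine ne_top_of_le_ne_top ?_ (measure_mono Set.inter_subset_right)
        exact (isCompact_closedBall _ _).measure_ne_top
      have hAle : (L / 2) ^ 2 * Real.pi ≤ A := by
        have := ENNReal.toReal_mono hfin hvol
        rw [ENNReal.toReal_mul, ENNReal.toReal_pow, ENNReal.toReal_ofReal (by positivity),
          ENNReal.toReal_ofReal Real.pi_pos.le] at this
        exact this
      have h1 : (L / 2) ^ 2 ≤ A / Real.pi := by
        rw [le_div_iff₀ Real.pi_pos]; exact hAle
      have h2 : L / 2 ≤ Real.sqrt (A / Real.pi) := by
        have := Real.sqrt_le_sqrt h1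
        rwa [Real.sqrt_sq (by linarith)] at this
      linarith
  calc volume {x : ℝ | x ∈ Set.Icc (1 : ℝ) 2 ∧
      (Metric.sphere (0 : EuclideanSpace ℝ (Fin 2)) x ∩ Metric.closedBall p r).Nonempty}
      ≤ volume (Set.Icc a b) := measure_mono hsub
    _ = ENNReal.ofReal (b - a) := Real.volume_Icc
    _ ≤ ENNReal.ofReal (2 * Real.sqrt (A / Real.pi)) := ENNReal.ofReal_le_ofReal key
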